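/- Let σ > 0 and let P be a σ-smooth probability measure on [0,1]². Let ε > 0 and let p, p', q, q' ∈ [0,1] satisfy p ≤ p' ≤ p + ε and q − ε ≤ q' ≤ q. Then ∫ GFT(p,q,s,b) dP(s,b) ≤ ∫ GFT(p',q',s,b) dP(s,b) + 2ε/σ. -/

import Mathlib

open MeasureTheory

/-- Gain from trade. -/
noncomputable def GFT (p q s b : ℝ) : ℝ := (b - s) * (if s ≤ p ∧ q ≤ b then 1 else 0)

lemma GFT_meas (p q : ℝ) : Measurable (fun x : ℝ × ℝ => GFT p q x.1 x.2) := by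
  unfold GFT
  apply Measurable.mul (measurable_snd.sub measurable_fst)
  exact Measurable.ite
    ((measurableSet_le measurable_fst measurable_const).inter
      (measurableSet_le measurable_const measurable_snd))
    measurable_const measurable_const

theorem stmt4 (σ : ℝ) (hσ : 0 < σ) (P : Measure (ℝ × ℝ)) [IsProbabilityMeasure P]
    (hsupp : P ((Set.Icc (0:ℝ) 1 ×ˢ Set.Icc (0:ℝ) 1)ᶜ) = 0)
    (hsmooth : ∀ A : Set (ℝ × ℝ), MeasurableSet A → P A ≤ volume A / ENNReal.ofReal σ)
    (ε : ℝ) (hε : 0 < ε) (p p' q q' : ℝ)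
    (hp : p ∈ Set.Icc (0:ℝ) 1) (hp' : p' ∈ Set.Icc (0:ℝ) 1)
    (hq : q ∈ Set.Icc (0:ℝ) 1) (hq' : q' ∈ Set.Icc (0:ℝ) 1)
    (h1 : p ≤ p') (h2 : p' ≤ p + ε) (h3 : q - ε ≤ q') (h4 : q' ≤ q) :
    ∫ x, GFT p q x.1 x.2 ∂P ≤ (∫ x, GFT p' q' x.1 x.2 ∂P) + 2 * ε / σ := by
  set sq : Set (ℝ × ℝ) := Set.Icc (0:ℝ) 1 ×ˢ Set.Icc (0:ℝ) 1 with hsq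
  set S1 : Set (ℝ × ℝ) := Set.Ioc p p' ×ˢ (Set.univ : Set ℝ) with hS1
  set S2 : Set (ℝ × ℝ) := (Set.univ : Set ℝ) ×ˢ Set.Ico q' q with hS2
  set S := S1 ∪ S2 with hS
  have hS1m : MeasurableSet S1 := measurableSet_Ioc.prod MeasurableSet.univ
  have hS2m : MeasurableSet S2 := MeasurableSet.univ.prod measurableSet_Ico
  have hSm : MeasurableSet S := hS1m.union hS2m
  have hsqm : MeasurableSet sq := measurableSet_Icc.prod measurableSet_Icc
  -- a.e. membership in the square
  have hae : ∀ᵐ x ∂P, x ∈ sq := by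
    rw [MeasureTheory.ae_iff]
    exact hsupp
  -- integrability of both GFT functions
  have hint : ∀ a b : ℝ, Integrable (fun x : ℝ × ℝ => GFT a b x.1 x.2) P := by
    intro a b
    refine Integrable.mono' (integrable_const (2:ℝ)) (GFT_meas a b).aestronglyMeasurable ?_
    filter_upwards [hae] with x hx
    obtain ⟨⟨hx1, hx2⟩, hx3, hx4⟩ := hx
    simp only [GFT]
    rw [Real.norm_eq_abs, abs_mul]
    have : |x.2 - x.1| ≤ 2 := by rw [abs_le]; constructor <;> linarith
    have h2' : |(if x.1 ≤ a ∧ b ≤ x.2 then (1:ℝ) else 0)| ≤ 1 := by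
      split_ifs <;> simp
    nlinarith [abs_nonneg (x.2 - x.1), abs_nonneg (if x.1 ≤ a ∧ b ≤ x.2 then (1:ℝ) else 0)]
  have hintS : Integrable (S.indicator (fun _ => (1:ℝ))) P :=
    (integrable_const (1:ℝ)).indicator hSm
  -- pointwise inequality
  have hpt : ∀ x : ℝ × ℝ, GFT p q x.1 x.2 ≤ GFT p' q' x.1 x.2 + S.indicator (fun _ => (1:ℝ)) x := by
    intro ⟨s, b⟩
    have hind : (0:ℝ) ≤ S.indicator (fun _ => (1:ℝ)) (s, b) := by
      apply Set.indicator_nonneg; intros; norm_num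
    simp only [GFT]
    by_cases hA : s ≤ p ∧ q ≤ b
    · have hA' : s ≤ p' ∧ q' ≤ b := ⟨hA.1.trans h1, h4.trans hA.2⟩
      rw [if_pos hA, if_pos hA']
      linarith
    · rw [if_neg hA]
      by_cases hA' : s ≤ p' ∧ q' ≤ b
      · rw [if_pos hA']
        have hmem : (s, b) ∈ S := by
          push_neg at hA
          rcases lt_or_ge p s with hps | hps
          · exact Or.inl ⟨⟨hps, hA'.1⟩, Set.mem_univ _⟩
          · exact Or.inr ⟨Set.mem_univ _, ⟨hA'.2, hA hps⟩⟩
        rw [Set.indicator_of_mem hmem]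
        have : b - s ≥ -1 := by
          have := hA'.1; have := hA'.2
          have := hp'.2; have := hq'.1
          linarith
        linarith
      · rw [if_neg hA']; simpa using hind
  -- measure bound on S
  have hPS : P S ≤ ENNReal.ofReal (2 * ε / σ) := by
    have hsub : S ⊆ (S1 ∩ sq) ∪ (S2 ∩ sq) ∪ sqᶜ := by
      intro x hx
      by_cases hxs : x ∈ sq
      · rcases hx with h | h
        · exact Or.inl (Or.inl ⟨h, hxs⟩)
        · exact Or.inl (Or.inr ⟨h, hxs⟩)
      · exact Or.inr hxs
    have hb1 : P (S1 ∩ sq) ≤ ENNReal.ofReal ε / ENNReal.ofReal σ := by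
      refine (hsmooth _ (hS1m.inter hsqm)).trans ?_
      apply ENNReal.div_le_div_right
      have : S1 ∩ sq ⊆ Set.Ioc p p' ×ˢ Set.Icc (0:ℝ) 1 := by
        intro x hx; exact ⟨hx.1.1, hx.2.2⟩
      refine (measure_mono this).trans ?_
      rw [Measure.volume_eq_prod, Measure.prod_prod, Real.volume_Ioc, Real.volume_Icc]
      simp only [sub_zero, ENNReal.ofReal_one, mul_one]
      exact ENNReal.ofReal_le_ofReal (by linarith)
    have hb2 : P (S2 ∩ sq) ≤ ENNReal.ofReal ε / ENNReal.ofReal σ := by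
      refine (hsmooth _ (hS2m.inter hsqm)).trans ?_
      apply ENNReal.div_le_div_right
      have : S2 ∩ sq ⊆ Set.Icc (0:ℝ) 1 ×ˢ Set.Ico q' q := by
        intro x hx; exact ⟨hx.2.1, hx.1.2⟩
      refine (measure_mono this).trans ?_
      rw [Measure.volume_eq_prod, Measure.prod_prod, Real.volume_Ico, Real.volume_Icc]
      simp only [sub_zero, ENNReal.ofReal_one, one_mul]
      exact ENNReal.ofReal_le_ofReal (by linarith)
    calc P S ≤ P ((S1 ∩ sq) ∪ (S2 ∩ sq) ∪ sqᶜ) := measure_mono hsub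
      _ ≤ P ((S1 ∩ sq) ∪ (S2 ∩ sq)) + P sqᶜ := measure_union_le _ _
      _ = P ((S1 ∩ sq) ∪ (S2 ∩ sq)) := by rw [hsupp, add_zero]
      _ ≤ P (S1 ∩ sq) + P (S2 ∩ sq) := measure_union_le _ _
      _ ≤ ENNReal.ofReal ε / ENNReal.ofReal σ + ENNReal.ofReal ε / ENNReal.ofReal σ :=
          add_le_add hb1 hb2
      _ = (ENNReal.ofReal ε + ENNReal.ofReal ε) / ENNReal.ofReal σ :=
          ENNReal.div_add_div_same
      _ = ENNReal.ofReal (2 * ε) / ENNReal.ofReal σ := by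
          rw [← ENNReal.ofReal_add hε.le hε.le]; ring_nf
      _ = ENNReal.ofReal (2 * ε / σ) := (ENNReal.ofReal_div_of_pos hσ).symm
  have hind_int : ∫ x, S.indicator (fun _ => (1:ℝ)) x ∂P ≤ 2 * ε / σ := by
    rw [integral_indicator_const (1:ℝ) hSm]
    simp only [smul_eq_mul, mul_one]
    exact ENNReal.toReal_le_of_le_ofReal (by positivity) hPS
  calc ∫ x, GFT p q x.1 x.2 ∂P
      ≤ ∫ x, (GFT p' q' x.1 x.2 + S.indicator (fun _ => (1:ℝ)) x) ∂P :=
        integral_mono (hint p q) ((hint p' q').add hintS) hpt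
    _ = (∫ x, GFT p' q' x.1 x.2 ∂P) + ∫ x, S.indicator (fun _ => (1:ℝ)) x ∂P :=
        integral_add (hint p' q') hintS
    _ ≤ (∫ x, GFT p' q' x.1 x.2 ∂P) + 2 * ε / σ := by linarith
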